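/- arXiv:1312.3582 — 4 statements merged into one kernel-verified Lean document; each statement's English description precedes it below -/
import Mathlib

section
/- Let u, v ∈ C^N with ‖supp(u) ∪ supp(v)‖_{ω,0} ≤ t, and suppose A has ω-RIP constant δ_{ω,t}. Then |⟨u, (I − A*A)v⟩| ≤ δ_{ω,t} ‖u‖₂ ‖v‖₂. -/
open Finset

/-- ℓ2 norm of a finitely-indexed complex vector. -/
noncomputable def l2 {n : ℕ} (x : Fin n → ℂ) : ℝ := Real.sqrt (∑ j, ‖x j‖ ^ 2)

/-- ℓ1 norm. -/
noncomputable def l1 {n : ℕ} (x : Fin n → ℂ) : ℝ := ∑ j, ‖x j‖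

/-- Support of a vector as a finset. -/
noncomputable def spt {n : ℕ} (x : Fin n → ℂ) : Finset (Fin n) := Finset.univ.filter (fun j => x j ≠ 0)

/-- Weighted ℓ0 "norm" ‖x‖_{ω,0} = ∑_{j : x_j ≠ 0} ω_j². -/
noncomputable def wnorm0 {n : ℕ} (ω : Fin n → ℝ) (x : Fin n → ℂ) : ℝ :=
  ∑ j ∈ spt x, (ω j) ^ 2

/-- Weighted ℓ1 norm ‖x‖_{ω,1} = ∑_j |x_j| ω_j. -/
noncomputable def wl1 {n : ℕ} (ω : Fin n → ℝ) (x : Fin n → ℂ) : ℝ := ∑ j, ‖x j‖ * ω j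

/-- Weighted cardinality of an index set. -/
noncomputable def wcard {n : ℕ} (ω : Fin n → ℝ) (S : Finset (Fin n)) : ℝ := ∑ j ∈ S, (ω j) ^ 2

/-- Restriction of a vector to an index set (zeroing the other coordinates). -/
def restr {n : ℕ} (S : Finset (Fin n)) (x : Fin n → ℂ) : Fin n → ℂ :=
  fun j => if j ∈ S then x j else 0

private lemma l2_sq' {n : ℕ} (x : Fin n → ℂ) : l2 x ^ 2 = ∑ j, Complex.normSq (x j) := by
  rw [l2, Real.sq_sqrt (by positivity)]
  simp [Complex.normSq_eq_norm_sq]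

private lemma par' {n : ℕ} (x y : Fin n → ℂ) :
    (∑ j, Complex.normSq (x j + y j)) - ∑ j, Complex.normSq (x j - y j)
      = 4 * (∑ j, (starRingEnd ℂ) (x j) * y j).re := by
  rw [Complex.re_sum, Finset.mul_sum, ← Finset.sum_sub_distrib]
  congr 1; ext j
  simp [Complex.normSq_add, Complex.normSq_sub, Complex.mul_re, Complex.conj_re, Complex.conj_im]
  ring

private lemma par2' {n : ℕ} (x y : Fin n → ℂ) :
    (∑ j, Complex.normSq (x j + y j)) + ∑ j, Complex.normSq (x j - y j)
      = 2 * (∑ j, Complex.normSq (x j)) + 2 * ∑ j, Complex.normSq (y j) := by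
  rw [Finset.mul_sum, Finset.mul_sum, ← Finset.sum_add_distrib, ← Finset.sum_add_distrib]
  congr 1; ext j
  simp [Complex.normSq_add, Complex.normSq_sub]
  ring

private lemma adj' {m N : ℕ} (A : Matrix (Fin m) (Fin N) ℂ) (x y : Fin N → ℂ) :
    ∑ j, (starRingEnd ℂ) (x j) * (A.conjTranspose.mulVec (A.mulVec y)) j
      = ∑ i, (starRingEnd ℂ) ((A.mulVec x) i) * (A.mulVec y) i := by
  trans (∑ i, ∑ j, ∑ k, (starRingEnd ℂ) (x j) * (starRingEnd ℂ) (A i j) * A i k * y k)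
  · simp only [Matrix.mulVec, dotProduct, Matrix.conjTranspose_apply, Finset.mul_sum]
    rw [Finset.sum_comm]
    exact Finset.sum_congr rfl fun i _ => Finset.sum_congr rfl fun j _ =>
      Finset.sum_congr rfl fun k _ => by simp; ring
  · simp only [Matrix.mulVec, dotProduct, map_sum, map_mul, Finset.sum_mul, Finset.mul_sum]
    refine Finset.sum_congr rfl fun i _ => ?_
    rw [Finset.sum_comm]
    exact Finset.sum_congr rfl fun j _ => Finset.sum_congr rfl fun k _ => by ring

/-- |⟨u, (I − A*A)v⟩| ≤ δ_{ω,t} ‖u‖₂ ‖v‖₂ when ω(supp u ∪ supp v) ≤ t. -/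
theorem wrip_inner_bound {m N : ℕ} (A : Matrix (Fin m) (Fin N) ℂ)
    (ω : Fin N → ℝ) (hω : ∀ j, 1 ≤ ω j) (t δ : ℝ)
    (hRIP : ∀ z : Fin N → ℂ, wnorm0 ω z ≤ t →
      (1 - δ) * l2 z ^ 2 ≤ l2 (A.mulVec z) ^ 2 ∧ l2 (A.mulVec z) ^ 2 ≤ (1 + δ) * l2 z ^ 2)
    (u v : Fin N → ℂ) (hsupp : wcard ω (spt u ∪ spt v) ≤ t) :
    ‖∑ j, (starRingEnd ℂ) (u j) * (v j - (A.conjTranspose.mulVec (A.mulVec v)) j)‖ ≤ δ * l2 u * l2 v := by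
  classical
  set c : ℂ := ∑ j, (starRingEnd ℂ) (u j) * (v j - (A.conjTranspose.mulVec (A.mulVec v)) j) with hc
  have hQ : ∀ z : Fin N → ℂ, wnorm0 ω z ≤ t →
      |(∑ j, Complex.normSq (z j)) - ∑ i, Complex.normSq (A.mulVec z i)| ≤
        δ * ∑ j, Complex.normSq (z j) := by
    intro z hz
    obtain ⟨h1, h2⟩ := hRIP z hz
    rw [l2_sq', l2_sq'] at h1
    rw [l2_sq', l2_sq'] at h2
    rw [abs_le]; constructor <;> linarith
  have hsubt : ∀ z : Fin N → ℂ, (∀ j, u j = 0 → v j = 0 → z j = 0) → wnorm0 ω z ≤ t := by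
    intro z hz
    refine le_trans ?_ hsupp
    apply Finset.sum_le_sum_of_subset_of_nonneg
    · intro j hj
      simp only [spt, Finset.mem_union, Finset.mem_filter, Finset.mem_univ, true_and] at hj ⊢
      by_contra h
      push_neg at h
      exact hj (hz j h.1 h.2)
    · intro j _ _; positivity
  by_cases hu : u = 0
  · simp [hu, l2, hc]
  by_cases hcz : c = 0
  · rw [hcz, norm_zero]
    have hut : wnorm0 ω u ≤ t := hsubt u (fun j h _ => h)
    have hQu := hQ u hut
    have hupos : 0 < ∑ j, Complex.normSq (u j) := by
      obtain ⟨j, hj⟩ : ∃ j, u j ≠ 0 := by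
        by_contra h; push_neg at h; exact hu (funext h)
      have : 0 < Complex.normSq (u j) := Complex.normSq_pos.2 hj
      have hle : Complex.normSq (u j) ≤ ∑ j, Complex.normSq (u j) :=
        Finset.single_le_sum (fun i _ => Complex.normSq_nonneg _) (Finset.mem_univ j)
      linarith
    have hδ : 0 ≤ δ := by nlinarith [abs_nonneg ((∑ j, Complex.normSq (u j)) - ∑ i, Complex.normSq (A.mulVec u i))]
    have h1 : 0 ≤ l2 u := Real.sqrt_nonneg _
    have h2 : 0 ≤ l2 v := Real.sqrt_nonneg _
    positivity
  have hv : v ≠ 0 := by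
    intro h
    apply hcz
    simp [hc, h, Matrix.mulVec_zero]
  have hupos : 0 < ∑ j, Complex.normSq (u j) := by
    obtain ⟨j, hj⟩ : ∃ j, u j ≠ 0 := by
      by_contra h; push_neg at h; exact hu (funext h)
    have : 0 < Complex.normSq (u j) := Complex.normSq_pos.2 hj
    have hle : Complex.normSq (u j) ≤ ∑ j, Complex.normSq (u j) :=
      Finset.single_le_sum (fun i _ => Complex.normSq_nonneg _) (Finset.mem_univ j)
    linarith
  have hvpos : 0 < ∑ j, Complex.normSq (v j) := by
    obtain ⟨j, hj⟩ : ∃ j, v j ≠ 0 := by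
      by_contra h; push_neg at h; exact hv (funext h)
    have : 0 < Complex.normSq (v j) := Complex.normSq_pos.2 hj
    have hle : Complex.normSq (v j) ≤ ∑ j, Complex.normSq (v j) :=
      Finset.single_le_sum (fun i _ => Complex.normSq_nonneg _) (Finset.mem_univ j)
    linarith
  have hlu : 0 < l2 u := by
    have h0 : 0 ≤ l2 u := Real.sqrt_nonneg _
    rcases h0.eq_or_lt with h | h
    · exfalso; have := l2_sq' u; rw [← h] at this; simp at this; linarith
    · exact h
  have hlv : 0 < l2 v := by
    have h0 : 0 ≤ l2 v := Real.sqrt_nonneg _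
    rcases h0.eq_or_lt with h | h
    · exfalso; have := l2_sq' v; rw [← h] at this; simp at this; linarith
    · exact h
  set μ : ℂ := (‖c‖ : ℂ) / c with hμ
  have hμc : μ * c = (‖c‖ : ℂ) := div_mul_cancel₀ _ hcz
  have hcnorm : ‖c‖ ≠ 0 := norm_ne_zero_iff.2 hcz
  have hμsq : Complex.normSq μ = 1 := by
    rw [hμ, Complex.normSq_div, Complex.normSq_ofReal, Complex.normSq_eq_norm_sq,
      sq]
    exact div_self (mul_ne_zero hcnorm hcnorm)
  set s : ℂ := (l2 u : ℂ) * μ with hs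
  set a : Fin N → ℂ := (l2 v : ℂ) • u with ha
  set b : Fin N → ℂ := s • v with hb
  set E : ℂ := ∑ j, (starRingEnd ℂ) (a j) * (b j - (A.conjTranspose.mulVec (A.mulVec b)) j)
    with hE
  have hE1 : E = ((l2 u * l2 v : ℝ) : ℂ) * (μ * c) := by
    have hAAb : A.conjTranspose.mulVec (A.mulVec b) =
        s • (A.conjTranspose.mulVec (A.mulVec v)) := by
      rw [hb, Matrix.mulVec_smul, Matrix.mulVec_smul]
    rw [hE, hAAb, hc, Finset.mul_sum, Finset.mul_sum]
    refine Finset.sum_congr rfl fun j _ => ?_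
    simp only [ha, hb, hs, Pi.smul_apply, smul_eq_mul, map_mul, Complex.conj_ofReal]
    push_cast
    ring
  have hEre : E.re = l2 u * l2 v * ‖c‖ := by
    rw [hE1, hμc, ← Complex.ofReal_mul, Complex.ofReal_re]
  have hE2 : E = (∑ j, (starRingEnd ℂ) (a j) * b j)
      - ∑ i, (starRingEnd ℂ) ((A.mulVec a) i) * ((A.mulVec b) i) := by
    rw [hE, ← adj' A a b, ← Finset.sum_sub_distrib]
    refine Finset.sum_congr rfl fun j _ => ?_
    ring
  have hQpol :
      ((∑ j, Complex.normSq (a j + b j)) - ∑ i, Complex.normSq ((A.mulVec a) i + (A.mulVec b) i))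
        - ((∑ j, Complex.normSq (a j - b j))
            - ∑ i, Complex.normSq ((A.mulVec a) i - (A.mulVec b) i))
        = 4 * E.re := by
    have h1 := par' a b
    have h2 := par' (A.mulVec a) (A.mulVec b)
    have h3 : E.re = (∑ j, (starRingEnd ℂ) (a j) * b j).re
        - (∑ i, (starRingEnd ℂ) ((A.mulVec a) i) * ((A.mulVec b) i)).re := by
      rw [hE2, Complex.sub_re]
    linarith
  have hab : ∀ j : Fin N, u j = 0 → v j = 0 → (a j + b j = 0 ∧ a j - b j = 0) := by
    intro j h1 h2
    simp [ha, hb, h1, h2]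
  have hQ1 := hQ (a + b) (hsubt _ fun j h1 h2 => by
    simpa using (hab j h1 h2).1)
  have hQ2 := hQ (a - b) (hsubt _ fun j h1 h2 => by
    simpa using (hab j h1 h2).2)
  simp only [Pi.add_apply, Pi.sub_apply, Matrix.mulVec_add, Matrix.mulVec_sub] at hQ1 hQ2
  have hSa : ∑ j, Complex.normSq (a j) = l2 v ^ 2 * ∑ j, Complex.normSq (u j) := by
    rw [Finset.mul_sum]
    refine Finset.sum_congr rfl fun j _ => ?_
    simp [ha, Complex.normSq_mul, Complex.normSq_ofReal, sq]
  have hSb : ∑ j, Complex.normSq (b j) = l2 u ^ 2 * ∑ j, Complex.normSq (v j) := by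
    rw [Finset.mul_sum]
    refine Finset.sum_congr rfl fun j _ => ?_
    simp only [hb, hs, Pi.smul_apply, smul_eq_mul, Complex.normSq_mul,
      Complex.normSq_ofReal, hμsq, sq]
    ring
  have hpar2 := par2' a b
  have hu2 := l2_sq' u
  have hv2 := l2_sq' v
  have habs1 := abs_le.1 hQ1
  have habs2 := abs_le.1 hQ2
  have hprod : 0 < l2 u * l2 v := mul_pos hlu hlv
  have hSig : (∑ j, Complex.normSq (a j + b j)) + ∑ j, Complex.normSq (a j - b j)
      = 4 * (l2 u * l2 v) ^ 2 := by
    rw [hpar2, hSa, hSb, ← hu2, ← hv2]; ring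
  have h4 : δ * (∑ j, Complex.normSq (a j + b j)) + δ * ∑ j, Complex.normSq (a j - b j)
      = 4 * (δ * (l2 u * l2 v) ^ 2) := by
    rw [← mul_add, hSig]; ring
  have key : l2 u * l2 v * ‖c‖ ≤ δ * (l2 u * l2 v) ^ 2 := by
    linarith [habs1.2, habs2.1]
  nlinarith [key, hprod]
end

section
/- Suppose A ∈ C^{m×N} satisfies ‖Ax‖₂ ≤ √(1+δ) ‖x‖₂ for all s-sparse x. Then for every x ∈ C^N, ‖Ax‖₂ ≤ √(1+δ) (‖x‖₂ + ‖x‖₁/√s). -/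
open Finset

lemma l1_nonneg' {n : ℕ} (x : Fin n → ℂ) : 0 ≤ l1 x :=
  Finset.sum_nonneg fun _ _ => norm_nonneg _

lemma l2_add_le' {n : ℕ} (x y : Fin n → ℂ) : l2 (x + y) ≤ l2 x + l2 y := by
  have h := norm_add_le (E := EuclideanSpace ℂ (Fin n))
    ((WithLp.equiv 2 (Fin n → ℂ)).symm x) ((WithLp.equiv 2 (Fin n → ℂ)).symm y)
  simpa [EuclideanSpace.norm_eq, l2] using h

lemma l2_le_of_bound {n : ℕ} (x : Fin n → ℂ) (S : Finset (Fin n)) (M : ℝ) (hM0 : 0 ≤ M)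
    (hspt : spt x ⊆ S) (hM : ∀ j ∈ S, ‖x j‖ ≤ M) :
    l2 x ≤ Real.sqrt S.card * M := by
  have hsum : ∑ j, ‖x j‖ ^ 2 = ∑ j ∈ S, ‖x j‖ ^ 2 := by
    refine (Finset.sum_subset (Finset.subset_univ S) ?_).symm
    intro j _ hj
    have hx : x j = 0 := by
      by_contra h
      exact hj (hspt (by simp [spt, h]))
    simp [hx]
  have hle : ∑ j ∈ S, ‖x j‖ ^ 2 ≤ S.card * M ^ 2 := by
    calc ∑ j ∈ S, ‖x j‖ ^ 2 ≤ ∑ _j ∈ S, M ^ 2 :=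
          Finset.sum_le_sum fun j hj => by nlinarith [hM j hj, norm_nonneg (x j)]
    _ = S.card * M ^ 2 := by simp [mul_comm]
  calc l2 x = Real.sqrt (∑ j, ‖x j‖ ^ 2) := rfl
  _ ≤ Real.sqrt (S.card * M ^ 2) := Real.sqrt_le_sqrt (by rw [hsum]; exact hle)
  _ = Real.sqrt S.card * M := by
      rw [Real.sqrt_mul (by positivity), Real.sqrt_sq hM0]

lemma l2_restr_le {n : ℕ} (S : Finset (Fin n)) (x : Fin n → ℂ) : l2 (restr S x) ≤ l2 x := by
  apply Real.sqrt_le_sqrt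
  apply Finset.sum_le_sum
  intro j _
  by_cases h : j ∈ S <;> simp [restr, h]

lemma restr_decomp {n : ℕ} (S : Finset (Fin n)) (x : Fin n → ℂ) :
    x = restr S x + restr Sᶜ x := by
  funext j; by_cases h : j ∈ S <;> simp [restr, h]

lemma l1_split {n : ℕ} (S : Finset (Fin n)) (x : Fin n → ℂ) :
    l1 x = l1 (restr S x) + l1 (restr Sᶜ x) := by
  unfold l1
  rw [← Finset.sum_add_distrib]
  apply Finset.sum_congr rfl
  intro j _
  by_cases h : j ∈ S <;> simp [restr, h]

lemma spt_restr_subset {n : ℕ} (S : Finset (Fin n)) (x : Fin n → ℂ) :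
    spt (restr S x) ⊆ S := by
  intro j hj
  simp only [spt, Finset.mem_filter] at hj
  by_contra h
  exact hj.2 (by simp [restr, h])

lemma spt_restr_subset_spt {n : ℕ} (S : Finset (Fin n)) (x : Fin n → ℂ) :
    spt (restr S x) ⊆ spt x := by
  intro j hj
  simp only [spt, Finset.mem_filter] at hj ⊢
  refine ⟨Finset.mem_univ _, ?_⟩
  intro h
  exact hj.2 (by simp [restr, h])

lemma l1_restr {n : ℕ} (S : Finset (Fin n)) (x : Fin n → ℂ) :
    l1 (restr S x) = ∑ j ∈ S, ‖x j‖ := by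
  simp [l1, restr, apply_ite (norm : ℂ → ℝ), Finset.sum_ite_mem]

lemma exists_top_set {n : ℕ} (f : Fin n → ℝ) :
    ∀ k, k ≤ n → ∃ S : Finset (Fin n), S.card = k ∧ ∀ i ∈ S, ∀ j ∉ S, f j ≤ f i := by
  intro k
  induction k with
  | zero => exact fun _ => ⟨∅, rfl, by simp⟩
  | succ k ih =>
    intro hk
    obtain ⟨S, hcard, hprop⟩ := ih (Nat.le_of_succ_le hk)
    have hne : Sᶜ.Nonempty := by
      rw [← Finset.card_pos, Finset.card_compl, Fintype.card_fin, hcard]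
      omega
    obtain ⟨i₀, hi₀, hmax⟩ := Finset.exists_max_image Sᶜ f hne
    have hi₀S : i₀ ∉ S := Finset.mem_compl.mp hi₀
    refine ⟨insert i₀ S, by rw [Finset.card_insert_of_notMem hi₀S, hcard], ?_⟩
    intro i hi j hj
    rcases Finset.mem_insert.mp hi with h | h
    · subst h
      exact hmax j (Finset.mem_compl.mpr fun hjS => hj (Finset.mem_insert_of_mem hjS))
    · exact hprop i h j fun hjS => hj (Finset.mem_insert_of_mem hjS)

lemma rip_key {m N : ℕ} (A : Matrix (Fin m) (Fin N) ℂ)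
    (s : ℕ) (hs : 1 ≤ s) (δ : ℝ) (hδ : 0 ≤ δ)
    (hRIP : ∀ z : Fin N → ℂ, (spt z).card ≤ s →
      l2 (A.mulVec z) ≤ Real.sqrt (1 + δ) * l2 z) :
    ∀ k, ∀ x : Fin N → ℂ, (spt x).card ≤ k → ∀ M : ℝ, 0 ≤ M → (∀ j, ‖x j‖ ≤ M) →
      l2 (A.mulVec x) ≤ Real.sqrt (1 + δ) * (Real.sqrt s * M + l1 x / Real.sqrt s) := by
  have hspos : (0:ℝ) < s := by exact_mod_cast hs
  have hsq : (0:ℝ) < Real.sqrt s := Real.sqrt_pos.mpr hspos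
  have hss : Real.sqrt s * Real.sqrt s = (s:ℝ) := Real.mul_self_sqrt hspos.le
  have base : ∀ x : Fin N → ℂ, (spt x).card ≤ s → ∀ M : ℝ, 0 ≤ M → (∀ j, ‖x j‖ ≤ M) →
      l2 (A.mulVec x) ≤ Real.sqrt (1 + δ) * (Real.sqrt s * M + l1 x / Real.sqrt s) := by
    intro x hx M hM0 hM
    have h2 : l2 x ≤ Real.sqrt s * M := by
      calc l2 x ≤ Real.sqrt (spt x).card * M :=
            l2_le_of_bound x (spt x) M hM0 (Finset.Subset.refl _) fun j _ => hM j
      _ ≤ Real.sqrt s * M :=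
            mul_le_mul_of_nonneg_right (Real.sqrt_le_sqrt (by exact_mod_cast hx)) hM0
    calc l2 (A.mulVec x) ≤ Real.sqrt (1 + δ) * l2 x := hRIP x hx
    _ ≤ Real.sqrt (1 + δ) * (Real.sqrt s * M + l1 x / Real.sqrt s) := by
        have hl1 : 0 ≤ l1 x / Real.sqrt s := div_nonneg (l1_nonneg' x) hsq.le
        apply mul_le_mul_of_nonneg_left _ (Real.sqrt_nonneg _)
        linarith
  intro k
  induction k with
  | zero =>
    intro x hx M hM0 hM
    exact base x (le_trans hx (Nat.zero_le s)) M hM0 hM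
  | succ k ih =>
    intro x hx M hM0 hM
    by_cases hcard : (spt x).card ≤ s
    · exact base x hcard M hM0 hM
    · push_neg at hcard
      have hsN : s ≤ N := le_trans hcard.le (by
        simpa using Finset.card_le_card (Finset.subset_univ (spt x)))
      obtain ⟨S, hScard, hSmax⟩ := exists_top_set (fun j => ‖x j‖) s hsN
      set xS := restr S x with hxS
      set r := restr Sᶜ x with hr
      -- every element of S is in the support
      have hSsub : ∀ i ∈ S, x i ≠ 0 := by
        intro i hi hxi
        have hsub : spt x ⊆ S := by
          intro j hj
          by_contra hjS
          have := hSmax i hi j hjS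
          rw [hxi] at this
          simp only [norm_zero] at this
          have : x j = 0 := norm_le_zero_iff.mp this
          simp [spt, this] at hj
        exact absurd (Finset.card_le_card hsub) (by omega)
      have hSne : S.Nonempty := Finset.card_pos.mp (by omega)
      obtain ⟨i₀, hi₀⟩ := hSne
      have hi₀spt : i₀ ∈ spt x := by simp [spt, hSsub i₀ hi₀]
      have hrcard : (spt r).card ≤ k := by
        have hsub : spt r ⊆ (spt x).erase i₀ := by
          intro j hj
          have h1 : j ∈ Sᶜ := spt_restr_subset Sᶜ x hj
          have h2 : j ∈ spt x := spt_restr_subset_spt Sᶜ x hj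
          refine Finset.mem_erase.mpr ⟨?_, h2⟩
          intro hji
          exact (Finset.mem_compl.mp h1) (hji ▸ hi₀)
        have := Finset.card_le_card hsub
        rw [Finset.card_erase_of_mem hi₀spt] at this
        omega
      set M' := l1 xS / s with hM'
      have hM'0 : 0 ≤ M' := div_nonneg (l1_nonneg' _) hspos.le
      have hrbound : ∀ j, ‖r j‖ ≤ M' := by
        intro j
        by_cases hjS : j ∈ S
        · have : r j = 0 := by simp [hr, restr, hjS]
          rw [this, norm_zero]; exact hM'0
        · have h1 : r j = x j := by simp [hr, restr, hjS]
          rw [h1]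
          have h2 : (S.card : ℝ) * ‖x j‖ ≤ ∑ i ∈ S, ‖x i‖ := by
            have := Finset.card_nsmul_le_sum S (fun i => ‖x i‖) ‖x j‖
              (fun i hi => hSmax i hi j hjS)
            simpa [nsmul_eq_mul] using this
          rw [hM', l1_restr]
          rw [le_div_iff₀ hspos]
          rw [hScard] at h2
          linarith
      have hIH := ih r hrcard M' hM'0 hrbound
      have hRxS : l2 (A.mulVec xS) ≤ Real.sqrt (1 + δ) * l2 xS :=
        hRIP xS (le_trans (Finset.card_le_card (spt_restr_subset S x)) (le_of_eq hScard))
      have hxSle : l2 xS ≤ Real.sqrt s * M := by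
        have := l2_le_of_bound xS S M hM0 (spt_restr_subset S x)
          (fun j hj => by
            have : xS j = x j := by simp [hxS, restr, hj]
            rw [this]; exact hM j)
        rwa [hScard] at this
      have hsplit : l2 (A.mulVec x) ≤ l2 (A.mulVec xS) + l2 (A.mulVec r) := by
        conv_lhs => rw [restr_decomp S x]
        rw [Matrix.mulVec_add]
        exact l2_add_le' _ _
      have harith : Real.sqrt s * M' = l1 xS / Real.sqrt s := by
        rw [hM', eq_div_iff hsq.ne']
        field_simp
        linear_combination l1 xS * hss
      have hl1x : l1 x = l1 xS + l1 r := l1_split S x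
      calc l2 (A.mulVec x) ≤ l2 (A.mulVec xS) + l2 (A.mulVec r) := hsplit
      _ ≤ Real.sqrt (1 + δ) * l2 xS
            + Real.sqrt (1 + δ) * (Real.sqrt s * M' + l1 r / Real.sqrt s) := by
          linarith
      _ = Real.sqrt (1 + δ) * (l2 xS + l1 x / Real.sqrt s) := by
          rw [harith, hl1x]
          rw [add_div]
          ring
      _ ≤ Real.sqrt (1 + δ) * (Real.sqrt s * M + l1 x / Real.sqrt s) := by
          apply mul_le_mul_of_nonneg_left _ (Real.sqrt_nonneg _)
          linarith

/-- the upper RIP inequality for s-sparse vectors extends to all vectors: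
‖Ax‖₂ ≤ √(1+δ)(‖x‖₂ + ‖x‖₁/√s). -/
theorem upper_rip_all_vectors {m N : ℕ} (A : Matrix (Fin m) (Fin N) ℂ)
    (s : ℕ) (hs : 1 ≤ s) (δ : ℝ) (hδ : 0 ≤ δ)
    (hRIP : ∀ z : Fin N → ℂ, (spt z).card ≤ s →
      l2 (A.mulVec z) ≤ Real.sqrt (1 + δ) * l2 z) :
    ∀ x : Fin N → ℂ,
      l2 (A.mulVec x) ≤ Real.sqrt (1 + δ) * (l2 x + l1 x / Real.sqrt s) := by
  intro x
  have hspos : (0:ℝ) < s := by exact_mod_cast hs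
  have hsq : (0:ℝ) < Real.sqrt s := Real.sqrt_pos.mpr hspos
  have hss : Real.sqrt s * Real.sqrt s = (s:ℝ) := Real.mul_self_sqrt hspos.le
  by_cases hcard : (spt x).card ≤ s
  · calc l2 (A.mulVec x) ≤ Real.sqrt (1 + δ) * l2 x := hRIP x hcard
    _ ≤ Real.sqrt (1 + δ) * (l2 x + l1 x / Real.sqrt s) := by
        apply mul_le_mul_of_nonneg_left _ (Real.sqrt_nonneg _)
        have : 0 ≤ l1 x / Real.sqrt s := div_nonneg (l1_nonneg' x) hsq.le
        linarith
  · push_neg at hcard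
    have hsN : s ≤ N := le_trans hcard.le (by
      simpa using Finset.card_le_card (Finset.subset_univ (spt x)))
    obtain ⟨S, hScard, hSmax⟩ := exists_top_set (fun j => ‖x j‖) s hsN
    set xS := restr S x with hxS
    set r := restr Sᶜ x with hr
    set M' := l1 xS / s with hM'
    have hM'0 : 0 ≤ M' := div_nonneg (l1_nonneg' _) hspos.le
    have hrbound : ∀ j, ‖r j‖ ≤ M' := by
      intro j
      by_cases hjS : j ∈ S
      · have : r j = 0 := by simp [hr, restr, hjS]
        rw [this, norm_zero]; exact hM'0
      · have h1 : r j = x j := by simp [hr, restr, hjS]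
        rw [h1]
        have h2 : (S.card : ℝ) * ‖x j‖ ≤ ∑ i ∈ S, ‖x i‖ := by
          have := Finset.card_nsmul_le_sum S (fun i => ‖x i‖) ‖x j‖
            (fun i hi => hSmax i hi j hjS)
          simpa [nsmul_eq_mul] using this
        rw [hM', l1_restr]
        rw [le_div_iff₀ hspos]
        rw [hScard] at h2
        linarith
    have hIH := rip_key A s hs δ hδ hRIP (spt r).card r le_rfl M' hM'0 hrbound
    have hRxS : l2 (A.mulVec xS) ≤ Real.sqrt (1 + δ) * l2 xS :=
      hRIP xS (le_trans (Finset.card_le_card (spt_restr_subset S x)) (le_of_eq hScard))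
    have hxSle : l2 xS ≤ l2 x := l2_restr_le S x
    have hsplit : l2 (A.mulVec x) ≤ l2 (A.mulVec xS) + l2 (A.mulVec r) := by
      conv_lhs => rw [restr_decomp S x]
      rw [Matrix.mulVec_add]
      exact l2_add_le' _ _
    have harith : Real.sqrt s * M' = l1 xS / Real.sqrt s := by
      rw [hM', eq_div_iff hsq.ne']
      field_simp
      linear_combination l1 xS * hss
    have hl1x : l1 x = l1 xS + l1 r := l1_split S x
    calc l2 (A.mulVec x) ≤ l2 (A.mulVec xS) + l2 (A.mulVec r) := hsplit
    _ ≤ Real.sqrt (1 + δ) * l2 xS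
          + Real.sqrt (1 + δ) * (Real.sqrt s * M' + l1 r / Real.sqrt s) := by
        linarith
    _ = Real.sqrt (1 + δ) * (l2 xS + l1 x / Real.sqrt s) := by
        rw [harith, hl1x, add_div]
        ring
    _ ≤ Real.sqrt (1 + δ) * (l2 x + l1 x / Real.sqrt s) := by
        apply mul_le_mul_of_nonneg_left _ (Real.sqrt_nonneg _)
        linarith
end

section
/- Let weights ω satisfy ω_j ≥ 1 and let S₁,...,S_p be a partition of [N] with s − ‖ω‖_∞² ≤ ω(S_l) ≤ s, formed by nonincreasing rearrangement of |x_j|ω_j^{-1} (i.e., |x_j|ω_j^{-1} ≤ |x_k|ω_k^{-1} for all j ∈ S_l, k ∈ S_{l−1}). If s ≥ 2‖ω‖_∞², then for every l ≥ 2, ‖x_{S_l}‖₂ ≤ (2/√s) ‖x_{S_{l−1}}‖_{ω,1}. -/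
open Finset

/-- for a partition into weighted blocks formed by nonincreasing
rearrangement of |x_j|/ω_j, consecutive blocks satisfy
‖x_{S_l}‖₂ ≤ (2/√s)‖x_{S_{l−1}}‖_{ω,1}. -/
theorem weighted_block_tail_bound {N : ℕ} (ω : Fin N → ℝ) (hω : ∀ j, 1 ≤ ω j)
    (M s : ℝ) (hM : ∀ j, ω j ≤ M) (hs : 2 * M ^ 2 ≤ s)
    (p : ℕ) (S : ℕ → Finset (Fin N))
    (hdisj : ∀ i j, i < p → j < p → i ≠ j → Disjoint (S i) (S j))
    (hblocks : ∀ l, l < p → s - M ^ 2 ≤ wcard ω (S l) ∧ wcard ω (S l) ≤ s)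
    (x : Fin N → ℂ)
    (hrearr : ∀ l, 1 ≤ l → l < p → ∀ j ∈ S l, ∀ k ∈ S (l - 1),
      ‖x j‖ * (ω j)⁻¹ ≤ ‖x k‖ * (ω k)⁻¹) :
    ∀ l, 1 ≤ l → l < p →
      l2 (restr (S l) x) ≤ (2 / Real.sqrt s) * wl1 ω (restr (S (l - 1)) x) := by
  intro l hl1 hlp
  rcases Nat.eq_zero_or_pos N with hN | hN
  · subst hN
    simp [l2, wl1, restr]
  have hM1 : 1 ≤ M := le_trans (hω ⟨0, hN⟩) (hM ⟨0, hN⟩)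
  have hs0 : 0 < s := by nlinarith
  set T := S (l - 1) with hT
  set t := wcard ω T with ht
  have hlp' : l - 1 < p := lt_of_le_of_lt (Nat.sub_le l 1) hlp
  have htlb : s - M ^ 2 ≤ t := (hblocks _ hlp').1
  have ht0 : 0 < t := by nlinarith
  have ht2 : s / 2 ≤ t := by nlinarith
  set A := ∑ k ∈ T, ‖x k‖ * ω k with hA
  have hA0 : 0 ≤ A :=
    Finset.sum_nonneg fun k _ => mul_nonneg (norm_nonneg _) (le_trans zero_le_one (hω k))
  have hwl1 : wl1 ω (restr T x) = A := by
    rw [wl1, hA]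
    rw [show (∑ j, ‖restr T x j‖ * ω j) = ∑ j, if j ∈ T then ‖x j‖ * ω j else 0 from
      Finset.sum_congr rfl fun j _ => by simp only [restr]; split <;> simp]
    rw [Finset.sum_ite_mem, Finset.univ_inter]
  have key : ∀ j ∈ S l, ‖x j‖ * t ≤ ω j * A := by
    intro j hj
    calc ‖x j‖ * t = ∑ k ∈ T, ‖x j‖ * ω k ^ 2 := by rw [ht, wcard, Finset.mul_sum]
      _ ≤ ∑ k ∈ T, ω j * (‖x k‖ * ω k) := by
          refine Finset.sum_le_sum fun k hk => ?_
          have h := hrearr l hl1 hlp j hj k hk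
          have hwj : 0 < ω j := lt_of_lt_of_le one_pos (hω j)
          have hwk : 0 < ω k := lt_of_lt_of_le one_pos (hω k)
          rw [← div_eq_mul_inv, ← div_eq_mul_inv, div_le_div_iff₀ hwj hwk] at h
          nlinarith [norm_nonneg (x k), hwk.le]
      _ = ω j * A := by rw [hA, Finset.mul_sum]
  have hsum : (∑ j, ‖restr (S l) x j‖ ^ 2) ≤ wcard ω (S l) * (A / t) ^ 2 := by
    rw [show (∑ j, ‖restr (S l) x j‖ ^ 2) = ∑ j, if j ∈ S l then ‖x j‖ ^ 2 else 0 from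
      Finset.sum_congr rfl fun j _ => by simp only [restr]; split <;> simp]
    rw [Finset.sum_ite_mem, Finset.univ_inter, wcard, Finset.sum_mul]
    refine Finset.sum_le_sum fun j hj => ?_
    have hb : ‖x j‖ ≤ ω j * (A / t) := by
      rw [mul_div_assoc' (ω j) A t, le_div_iff₀ ht0]
      exact key j hj
    calc ‖x j‖ ^ 2 ≤ (ω j * (A / t)) ^ 2 := by
          exact pow_le_pow_left₀ (norm_nonneg _) hb 2
      _ = ω j ^ 2 * (A / t) ^ 2 := by ring
  have hcub : wcard ω (S l) ≤ s := (hblocks _ hlp).2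
  have hAt0 : 0 ≤ (A / t) ^ 2 := sq_nonneg _
  have hsum2 : (∑ j, ‖restr (S l) x j‖ ^ 2) ≤ s * (A / t) ^ 2 :=
    le_trans hsum (mul_le_mul_of_nonneg_right hcub hAt0)
  have hsq : Real.sqrt s ^ 2 = s := Real.sq_sqrt hs0.le
  have hsqrt0 : 0 < Real.sqrt s := Real.sqrt_pos.mpr hs0
  have hRHS0 : 0 ≤ 2 / Real.sqrt s * A := by positivity
  have hfin : s * (A / t) ^ 2 ≤ (2 / Real.sqrt s * A) ^ 2 := by
    have h1 : (2 / Real.sqrt s * A) ^ 2 = 4 * A ^ 2 / s := by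
      rw [mul_pow, div_pow, hsq]; ring
    rw [h1, div_pow, mul_div_assoc', div_le_div_iff₀ (pow_pos ht0 2) hs0]
    nlinarith [mul_nonneg (sq_nonneg A) (mul_nonneg (by linarith : (0:ℝ) ≤ 2 * t - s)
      (by linarith : (0:ℝ) ≤ 2 * t + s))]
  rw [hwl1, l2]
  calc Real.sqrt (∑ j, ‖restr (S l) x j‖ ^ 2)
      ≤ Real.sqrt ((2 / Real.sqrt s * A) ^ 2) :=
        Real.sqrt_le_sqrt (le_trans hsum2 hfin)
    _ = 2 / Real.sqrt s * A := Real.sqrt_sq hRHS0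
end

section
/- Let y = Ax + e with x ∈ C^N arbitrary, let x^s be a best (ω,s)-sparse approximation to x with support S, and suppose A has ω-RIP constant δ_{ω,3s} < 1/√32. Then the IHWT iterates x^n (with x^0 = 0) satisfy ‖x − x^n‖₂ ≤ 2^{−n} ‖x^s‖₂ + ‖x − x^s‖₂ + 4.34 ‖A x_{S̄} + e‖₂, where x_{S̄} = x − x^s. -/
set_option maxHeartbeats 1000000

open Finset

/- ## Auxiliary material -/

/-- View a plain vector as an element of Euclidean space. -/
noncomputable def Evec {k : ℕ} (z : Fin k → ℂ) : EuclideanSpace ℂ (Fin k) := WithLp.toLp 2 z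

lemma l2_eq_norm {k : ℕ} (z : Fin k → ℂ) : l2 z = ‖Evec z‖ := by
  simp only [l2]; rw [EuclideanSpace.norm_eq]; rfl

lemma Evec_zero {k : ℕ} : Evec (0 : Fin k → ℂ) = 0 := rfl

lemma wnorm0_eq_wcard {n : ℕ} (ω : Fin n → ℝ) (z : Fin n → ℂ) :
    wnorm0 ω z = wcard ω (spt z) := rfl

lemma wcard_mono {n : ℕ} (ω : Fin n → ℝ) {S T : Finset (Fin n)} (h : S ⊆ T) :
    wcard ω S ≤ wcard ω T :=
  Finset.sum_le_sum_of_subset_of_nonneg h (fun j _ _ => sq_nonneg (ω j))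

lemma wnorm0_le_of_subset {n : ℕ} (ω : Fin n → ℝ) {z : Fin n → ℂ} {T : Finset (Fin n)}
    (h : spt z ⊆ T) : wnorm0 ω z ≤ wcard ω T := by
  rw [wnorm0_eq_wcard]; exact wcard_mono ω h

lemma wcard_union_le {n : ℕ} (ω : Fin n → ℝ) (S T : Finset (Fin n)) :
    wcard ω (S ∪ T) ≤ wcard ω S + wcard ω T := by
  unfold wcard
  have h := Finset.sum_union_inter (s₁ := S) (s₂ := T) (f := fun j => (ω j)^2)
  have h2 : 0 ≤ ∑ j ∈ S ∩ T, (ω j)^2 := Finset.sum_nonneg fun j _ => sq_nonneg _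
  linarith

lemma spt_combo_add {k : ℕ} (c d : ℂ) (a b : Fin k → ℂ) :
    spt (fun j => c * a j + d * b j) ⊆ spt a ∪ spt b := by
  intro j hj
  simp only [spt, Finset.mem_filter, Finset.mem_union, Finset.mem_univ, true_and] at *
  by_contra hc
  push_neg at hc
  exact hj (by rw [hc.1, hc.2]; ring)

lemma spt_combo_sub {k : ℕ} (c d : ℂ) (a b : Fin k → ℂ) :
    spt (fun j => c * a j - d * b j) ⊆ spt a ∪ spt b := by
  intro j hj
  simp only [spt, Finset.mem_filter, Finset.mem_union, Finset.mem_univ, true_and] at *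
  by_contra hc
  push_neg at hc
  exact hj (by rw [hc.1, hc.2]; ring)

lemma spt_sub_subset {k : ℕ} (a b : Fin k → ℂ) :
    spt (fun j => a j - b j) ⊆ spt a ∪ spt b := by
  have := spt_combo_sub 1 1 a b
  simpa using this

lemma inner_conjT {m N : ℕ} (A : Matrix (Fin m) (Fin N) ℂ) (w : Fin m → ℂ) (u : Fin N → ℂ) :
    (inner ℂ (Evec (A.conjTranspose.mulVec w)) (Evec u) : ℂ)
      = inner ℂ (Evec w) (Evec (A.mulVec u)) := by
  simp only [Evec, PiLp.inner_apply, RCLike.inner_apply, Matrix.mulVec, dotProduct,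
    Matrix.conjTranspose_apply, map_sum, map_mul, RingHomCompTriple.comp_apply,
    Finset.sum_mul, Finset.mul_sum, Complex.conj_conj]
  rw [Finset.sum_comm]
  refine Finset.sum_congr rfl fun i _ => Finset.sum_congr rfl fun j _ => by
    simp only [starRingEnd_apply, star_star]; ring

lemma re_inner_smul {k : ℕ} (t : ℝ) (ht : t ≠ 0) (a b : EuclideanSpace ℂ (Fin k)) :
    RCLike.re (inner ℂ (((t:ℝ):ℂ) • a) (((t⁻¹:ℝ):ℂ) • b) : ℂ) = RCLike.re (inner ℂ a b : ℂ) := by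
  rw [inner_smul_left, inner_smul_right, Complex.conj_ofReal, ← mul_assoc,
    ← Complex.ofReal_mul, mul_inv_cancel₀ ht]
  simp

/-- IHWT convergence to a neighborhood: if δ_{ω,3s} < 1/√32 then the
IHWT iterates satisfy ‖x − x^n‖₂ ≤ 2^{−n}‖x^s‖₂ + ‖x − x^s‖₂ + 4.34‖A x_{S̄} + e‖₂. -/
theorem ihwt_convergence {m N : ℕ} (A : Matrix (Fin m) (Fin N) ℂ)
    (ω : Fin N → ℝ) (hω : ∀ j, 1 ≤ ω j) (s : ℝ)
    (x : Fin N → ℂ) (e y : Fin m → ℂ) (hy : y = fun i => A.mulVec x i + e i)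
    (xs : Fin N → ℂ) (hxs_sparse : wnorm0 ω xs ≤ s)
    (hxs_best : ∀ z : Fin N → ℂ, wnorm0 ω z ≤ s →
      l2 (fun j => x j - xs j) ≤ l2 (fun j => x j - z j))
    (δ : ℝ) (hδ : δ < 1 / Real.sqrt 32)
    (hRIP : ∀ z : Fin N → ℂ, wnorm0 ω z ≤ 3 * s →
      (1 - δ) * l2 z ^ 2 ≤ l2 (A.mulVec z) ^ 2 ∧ l2 (A.mulVec z) ^ 2 ≤ (1 + δ) * l2 z ^ 2)
    (X : ℕ → Fin N → ℂ) (hX0 : X 0 = 0)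
    (hX : ∀ n, wnorm0 ω (X (n + 1)) ≤ s ∧
      ∀ z : Fin N → ℂ, wnorm0 ω z ≤ s →
        l2 (fun j => (X n j + A.conjTranspose.mulVec (fun i => y i - A.mulVec (X n) i) j) - X (n + 1) j) ≤
        l2 (fun j => (X n j + A.conjTranspose.mulVec (fun i => y i - A.mulVec (X n) i) j) - z j)) :
    ∀ n : ℕ,
      l2 (fun j => x j - X n j) ≤
        (1 / 2 : ℝ) ^ n * l2 xs + l2 (fun j => x j - xs j) +
          4.34 * l2 (fun i => A.mulVec (fun j => x j - xs j) i + e i) := by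
  -- numeric bound on δ
  have hδ177 : δ ≤ 0.177 := by
    have h32 : (5.65:ℝ) ≤ Real.sqrt 32 := by
      have h : (5.65:ℝ) = Real.sqrt (5.65^2) := (Real.sqrt_sq (by norm_num)).symm
      rw [h]
      exact Real.sqrt_le_sqrt (by norm_num)
    have h2 : 1 / Real.sqrt 32 ≤ 1 / 5.65 :=
      one_div_le_one_div_of_le (by norm_num) h32
    have h3 : (1:ℝ)/5.65 ≤ 0.177 := by norm_num
    linarith
  have hs0 : 0 ≤ s := le_trans (Finset.sum_nonneg fun j _ => sq_nonneg _) hxs_sparse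
  have hXs : ∀ n, wnorm0 ω (X n) ≤ s := by
    intro n
    cases n with
    | zero => rw [hX0]; simpa [wnorm0, spt] using hs0
    | succ k => exact (hX k).1
  -- the error vector
  obtain ⟨e', he'⟩ : ∃ e', e' = (fun i => A.mulVec (fun j => x j - xs j) i + e i) := ⟨_, rfl⟩
  -- polarization consequence of RIP
  have hpol : ∀ p q : Fin N → ℂ, wnorm0 ω (fun j => p j + q j) ≤ 3*s →
      wnorm0 ω (fun j => p j - q j) ≤ 3*s →
      RCLike.re (inner ℂ (Evec p) (Evec q) : ℂ)
        - RCLike.re (inner ℂ (Evec (A.mulVec p)) (Evec (A.mulVec q)) : ℂ)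
        ≤ δ/2 * (‖Evec p‖^2 + ‖Evec q‖^2) := by
    intro p q h1 h2
    have hA1 := hRIP _ h1
    have hA2 := hRIP _ h2
    simp only [l2_eq_norm] at hA1 hA2
    have hEadd : Evec (fun j => p j + q j) = Evec p + Evec q := rfl
    have hEsub : Evec (fun j => p j - q j) = Evec p - Evec q := rfl
    have hAadd : Evec (A.mulVec (fun j => p j + q j)) = Evec (A.mulVec p) + Evec (A.mulVec q) := by
      show Evec (A.mulVec (p + q)) = _
      rw [Matrix.mulVec_add]; rfl
    have hAsub : Evec (A.mulVec (fun j => p j - q j)) = Evec (A.mulVec p) - Evec (A.mulVec q) := by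
      show Evec (A.mulVec (p - q)) = _
      rw [Matrix.mulVec_sub]; rfl
    rw [hEadd, hAadd] at hA1
    rw [hEsub, hAsub] at hA2
    have n1 := norm_add_sq (𝕜 := ℂ) (Evec p) (Evec q)
    have n2 := norm_sub_sq (𝕜 := ℂ) (Evec p) (Evec q)
    have n3 := norm_add_sq (𝕜 := ℂ) (Evec (A.mulVec p)) (Evec (A.mulVec q))
    have n4 := norm_sub_sq (𝕜 := ℂ) (Evec (A.mulVec p)) (Evec (A.mulVec q))
    have hparn : ‖Evec p + Evec q‖^2 + ‖Evec p - Evec q‖^2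
        = 2*(‖Evec p‖^2 + ‖Evec q‖^2) := by
      have h := parallelogram_law_with_norm ℂ (Evec p) (Evec q)
      simp only [pow_two] at h ⊢
      exact h
    have hpar : δ * (‖Evec p + Evec q‖^2 + ‖Evec p - Evec q‖^2)
        = δ * (2*(‖Evec p‖^2 + ‖Evec q‖^2)) := by rw [hparn]
    nlinarith [hA1.1, hA2.2, n1, n2, n3, n4, hpar]
  -- the contraction step
  have hstep : ∀ n, ‖Evec (fun j => X (n+1) j - xs j)‖ ≤
      1/2 * ‖Evec (fun j => X n j - xs j)‖ + 2.17 * ‖Evec e'‖ := by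
    intro n
    obtain ⟨u, hu⟩ : ∃ u, u = (fun j => X (n+1) j - xs j) := ⟨_, rfl⟩
    obtain ⟨v, hv⟩ : ∃ v, v = (fun j => X n j - xs j) := ⟨_, rfl⟩
    obtain ⟨T, hT⟩ : ∃ T, T = spt (X n) ∪ spt (X (n+1)) ∪ spt xs := ⟨_, rfl⟩
    have hTcard : wcard ω T ≤ 3*s := by
      rw [hT]
      have h1 := wcard_union_le ω (spt (X n) ∪ spt (X (n+1))) (spt xs)
      have h2 := wcard_union_le ω (spt (X n)) (spt (X (n+1)))
      have e1 := wnorm0_eq_wcard ω (X n)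
      have e2 := wnorm0_eq_wcard ω (X (n+1))
      have e3 := wnorm0_eq_wcard ω xs
      have := hXs n
      have := (hX n).1
      linarith [hXs n, (hX n).1, hxs_sparse]
    have hsptu : spt u ⊆ T := by
      rw [hu, hT]
      intro j hj
      have := spt_sub_subset (X (n+1)) xs hj
      simp only [Finset.mem_union] at *
      tauto
    have hsptv : spt v ⊆ T := by
      rw [hv, hT]
      intro j hj
      have := spt_sub_subset (X n) xs hj
      simp only [Finset.mem_union] at *
      tauto
    -- quasi-orthogonality on T
    have hqo : ∀ p q : Fin N → ℂ, spt p ⊆ T → spt q ⊆ T →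
        RCLike.re (inner ℂ (Evec p) (Evec q) : ℂ)
          - RCLike.re (inner ℂ (Evec (A.mulVec p)) (Evec (A.mulVec q)) : ℂ)
          ≤ δ * (‖Evec p‖ * ‖Evec q‖) := by
      intro p q hp hq
      rcases eq_or_ne (‖Evec p‖) 0 with h0 | h0
      · have hp0 : Evec p = 0 := norm_eq_zero.mp h0
        have hp0' : p = 0 := congrArg WithLp.ofLp hp0
        subst hp0'
        rw [Evec_zero, Matrix.mulVec_zero, Evec_zero]
        simp
      rcases eq_or_ne (‖Evec q‖) 0 with h0' | h0'
      · have hq0 : Evec q = 0 := norm_eq_zero.mp h0'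
        have hq0' : q = 0 := congrArg WithLp.ofLp hq0
        subst hq0'
        rw [Evec_zero, Matrix.mulVec_zero, Evec_zero]
        simp
      have ha : 0 < ‖Evec p‖ := (norm_nonneg _).lt_of_ne (Ne.symm h0)
      have hb : 0 < ‖Evec q‖ := (norm_nonneg _).lt_of_ne (Ne.symm h0')
      set a := ‖Evec p‖
      set b := ‖Evec q‖
      have hba : 0 < b / a := div_pos hb ha
      set t := Real.sqrt (b / a) with htdef
      have ht0 : 0 < t := Real.sqrt_pos.mpr hba
      have ht2 : t^2 = b/a := Real.sq_sqrt hba.le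
      have hw1 : wnorm0 ω (fun j => ((t:ℝ):ℂ) * p j + ((t⁻¹:ℝ):ℂ) * q j) ≤ 3*s :=
        le_trans (wnorm0_le_of_subset ω ((spt_combo_add _ _ p q).trans
          (Finset.union_subset hp hq))) hTcard
      have hw2 : wnorm0 ω (fun j => ((t:ℝ):ℂ) * p j - ((t⁻¹:ℝ):ℂ) * q j) ≤ 3*s :=
        le_trans (wnorm0_le_of_subset ω ((spt_combo_sub _ _ p q).trans
          (Finset.union_subset hp hq))) hTcard
      have key := hpol (fun j => ((t:ℝ):ℂ) * p j) (fun j => ((t⁻¹:ℝ):ℂ) * q j) hw1 hw2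
      have hEp : Evec (fun j => ((t:ℝ):ℂ) * p j) = ((t:ℝ):ℂ) • Evec p := rfl
      have hEq : Evec (fun j => ((t⁻¹:ℝ):ℂ) * q j) = ((t⁻¹:ℝ):ℂ) • Evec q := rfl
      have hAp : Evec (A.mulVec (fun j => ((t:ℝ):ℂ) * p j))
          = ((t:ℝ):ℂ) • Evec (A.mulVec p) := by
        show Evec (A.mulVec (((t:ℝ):ℂ) • p)) = _
        rw [Matrix.mulVec_smul]; rfl
      have hAq : Evec (A.mulVec (fun j => ((t⁻¹:ℝ):ℂ) * q j))
          = ((t⁻¹:ℝ):ℂ) • Evec (A.mulVec q) := by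
        show Evec (A.mulVec (((t⁻¹:ℝ):ℂ) • q)) = _
        rw [Matrix.mulVec_smul]; rfl
      rw [hEp, hEq, hAp, hAq, re_inner_smul t ht0.ne' (Evec p) (Evec q),
        re_inner_smul t ht0.ne' (Evec (A.mulVec p)) (Evec (A.mulVec q))] at key
      have hnp : ‖((t:ℝ):ℂ) • Evec p‖ = t * a := by
        rw [norm_smul, Complex.norm_real, Real.norm_eq_abs, abs_of_pos ht0]
      have hnq : ‖((t⁻¹:ℝ):ℂ) • Evec q‖ = t⁻¹ * b := by
        rw [norm_smul, Complex.norm_real, Real.norm_eq_abs, abs_of_pos (inv_pos.mpr ht0)]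
      rw [hnp, hnq] at key
      have harith : δ/2 * ((t*a)^2 + (t⁻¹*b)^2) = δ * (a * b) := by
        have h1 : (t*a)^2 = (b/a) * a^2 := by rw [mul_pow, ht2]
        have h2 : (t⁻¹*b)^2 = (a/b) * b^2 := by
          rw [mul_pow, inv_pow, ht2, inv_div]
        rw [h1, h2]
        field_simp
        ring
      rw [harith] at key
      exact key
    -- the optimality inequality
    have key := (hX n).2 xs hxs_sparse
    simp only [l2_eq_norm] at key
    -- identify the "gradient" vector
    have harg : (fun i => y i - A.mulVec (X n) i) = fun i => e' i - A.mulVec v i := by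
      funext i
      have hsub1 : A.mulVec (fun j => x j - xs j) = fun i => A.mulVec x i - A.mulVec xs i := by
        rw [show (fun j => x j - xs j) = x - xs from rfl, Matrix.mulVec_sub]; rfl
      have hsub2 : A.mulVec v = fun i => A.mulVec (X n) i - A.mulVec xs i := by
        rw [hv, show (fun j => X n j - xs j) = X n - xs from rfl, Matrix.mulVec_sub]; rfl
      rw [hy, he', hsub2]
      simp only [hsub1]
      ring
    have hADsub : A.conjTranspose.mulVec (fun i => e' i - A.mulVec v i)
        = fun j => A.conjTranspose.mulVec e' j - A.conjTranspose.mulVec (A.mulVec v) j := by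
      rw [show (fun i => e' i - A.mulVec v i) = e' - A.mulVec v from rfl, Matrix.mulVec_sub]; rfl
    -- the vector b = a^n - xs
    have hBfun : (fun j => (X n j + A.conjTranspose.mulVec (fun i => y i - A.mulVec (X n) i) j) - xs j)
        = fun j => (v j - A.conjTranspose.mulVec (A.mulVec v) j) + A.conjTranspose.mulVec e' j := by
      funext j
      rw [harg, hADsub, hv]
      ring
    have hUfun : (fun j => (X n j + A.conjTranspose.mulVec (fun i => y i - A.mulVec (X n) i) j) - X (n+1) j)
        = fun j => ((fun j => (v j - A.conjTranspose.mulVec (A.mulVec v) j) + A.conjTranspose.mulVec e' j) j - u j) := by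
      funext j
      rw [harg, hADsub, hv, hu]
      ring
    rw [hUfun, hBfun] at key
    -- pass to Euclidean space vectors
    have hBE : Evec (fun j => (v j - A.conjTranspose.mulVec (A.mulVec v) j) + A.conjTranspose.mulVec e' j)
        = (Evec v - Evec (A.conjTranspose.mulVec (A.mulVec v))) + Evec (A.conjTranspose.mulVec e') := rfl
    have hUE : Evec (fun j => ((fun j => (v j - A.conjTranspose.mulVec (A.mulVec v) j) + A.conjTranspose.mulVec e' j) j - u j))
        = ((Evec v - Evec (A.conjTranspose.mulVec (A.mulVec v))) + Evec (A.conjTranspose.mulVec e')) - Evec u := rfl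
    rw [hUE, hBE] at key
    obtain ⟨B, hB⟩ : ∃ B, B = (Evec v - Evec (A.conjTranspose.mulVec (A.mulVec v))) + Evec (A.conjTranspose.mulVec e') := ⟨_, rfl⟩
    rw [← hB] at key
    -- square the optimality inequality
    have hexp := norm_sub_sq (𝕜 := ℂ) B (Evec u)
    have hkey2 : ‖B - Evec u‖^2 ≤ ‖B‖^2 := pow_le_pow_left₀ (norm_nonneg _) key 2
    have husq : ‖Evec u‖^2 ≤ 2 * RCLike.re (inner ℂ B (Evec u) : ℂ) := by linarith
    -- decompose the inner product
    have hBU : (inner ℂ B (Evec u) : ℂ)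
        = inner ℂ (Evec v) (Evec u) - inner ℂ (Evec (A.mulVec v)) (Evec (A.mulVec u))
          + inner ℂ (Evec e') (Evec (A.mulVec u)) := by
      rw [hB, inner_add_left, inner_sub_left, inner_conjT, inner_conjT]
    have hreBU : RCLike.re (inner ℂ B (Evec u) : ℂ)
        = RCLike.re (inner ℂ (Evec v) (Evec u) : ℂ)
          - RCLike.re (inner ℂ (Evec (A.mulVec v)) (Evec (A.mulVec u)) : ℂ)
          + RCLike.re (inner ℂ (Evec e') (Evec (A.mulVec u)) : ℂ) := by
      rw [hBU]; simp [map_add, map_sub]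
    -- bounds
    have hqovu := hqo v u hsptv hsptu
    have hCS : RCLike.re (inner ℂ (Evec e') (Evec (A.mulVec u)) : ℂ)
        ≤ ‖Evec e'‖ * ‖Evec (A.mulVec u)‖ := re_inner_le_norm (𝕜 := ℂ) _ _
    have hu3 : wnorm0 ω u ≤ 3*s := by
      have h1 : wnorm0 ω u ≤ wcard ω T := wnorm0_le_of_subset ω hsptu
      linarith
    have hAu2 : ‖Evec (A.mulVec u)‖^2 ≤ (1+δ) * ‖Evec u‖^2 := by
      have h := (hRIP u hu3).2
      simp only [l2_eq_norm] at h
      exact h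
    have hAu : ‖Evec (A.mulVec u)‖ ≤ 1.085 * ‖Evec u‖ := by
      have hsq : ‖Evec (A.mulVec u)‖^2 ≤ (1.085 * ‖Evec u‖)^2 := by
        nlinarith [sq_nonneg (‖Evec u‖), norm_nonneg (Evec u)]
      have h' := Real.sqrt_le_sqrt hsq
      rwa [Real.sqrt_sq (norm_nonneg _), Real.sqrt_sq (by positivity)] at h'
    have hprod : ‖Evec e'‖ * ‖Evec (A.mulVec u)‖ ≤ ‖Evec e'‖ * (1.085 * ‖Evec u‖) :=
      mul_le_mul_of_nonneg_left hAu (norm_nonneg _)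
    have hfin : ‖Evec u‖^2 ≤ (2*δ*‖Evec v‖ + 2.17*‖Evec e'‖) * ‖Evec u‖ := by
      nlinarith [husq, hreBU, hqovu, hCS, hprod]
    -- conclude
    rw [← hu, ← hv]
    rcases eq_or_lt_of_le (norm_nonneg (Evec u)) with h0 | h0
    · rw [← h0]; positivity
    · have h5 : ‖Evec u‖ ≤ 2*δ*‖Evec v‖ + 2.17*‖Evec e'‖ := by
        refine le_of_mul_le_mul_right ?_ h0
        calc ‖Evec u‖ * ‖Evec u‖ = ‖Evec u‖^2 := by ring
        _ ≤ (2*δ*‖Evec v‖ + 2.17*‖Evec e'‖) * ‖Evec u‖ := hfin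
      have h6 : 2*δ*‖Evec v‖ ≤ 1/2*‖Evec v‖ := by
        have hnn : (0:ℝ) ≤ (1/2 - 2*δ) * ‖Evec v‖ :=
          mul_nonneg (by linarith) (norm_nonneg _)
        nlinarith [hnn]
      linarith
  -- the induction
  have hind : ∀ n, ‖Evec (fun j => X n j - xs j)‖ ≤
      (1/2:ℝ)^n * ‖Evec xs‖ + 4.34 * ‖Evec e'‖ := by
    intro n
    induction n with
    | zero =>
      have h0 : (fun j => X 0 j - xs j) = fun j => -(xs j) := by
        funext j; rw [hX0]; simp
      rw [h0]
      have : Evec (fun j => -(xs j)) = -(Evec xs) := rfl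
      rw [this, norm_neg]
      have := norm_nonneg (Evec e')
      simp only [pow_zero, one_mul]
      linarith
    | succ k ih =>
      have := hstep k
      calc ‖Evec (fun j => X (k+1) j - xs j)‖
          ≤ 1/2 * ‖Evec (fun j => X k j - xs j)‖ + 2.17 * ‖Evec e'‖ := hstep k
        _ ≤ 1/2 * ((1/2:ℝ)^k * ‖Evec xs‖ + 4.34 * ‖Evec e'‖) + 2.17 * ‖Evec e'‖ := by
            have := norm_nonneg (Evec e')
            nlinarith [ih]
        _ = (1/2:ℝ)^(k+1) * ‖Evec xs‖ + 4.34 * ‖Evec e'‖ := by ring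
  -- conclusion
  intro n
  have htri : ‖Evec (fun j => x j - X n j)‖ ≤
      ‖Evec (fun j => x j - xs j)‖ + ‖Evec (fun j => X n j - xs j)‖ := by
    have hfe : (fun j => x j - X n j) = fun j => (x j - xs j) - (X n j - xs j) := by
      funext j; ring
    have hEe : Evec (fun j => (x j - xs j) - (X n j - xs j))
        = Evec (fun j => x j - xs j) - Evec (fun j => X n j - xs j) := rfl
    rw [hfe, hEe]
    exact norm_sub_le _ _
  have hindn := hind n
  rw [he'] at hindn
  simp only [l2_eq_norm]
  linarith [hindn, htri]
end
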